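/- The function π_ε(h_+, h_-) = log(2(e^ε cosh(h_+) + e^{-ε} cosh(h_-))) is strictly convex on ℝ², i.e., its Hessian matrix is positive definite at every point. -/

import Mathlib

noncomputable def piE (ε h₁ h₂ : ℝ) : ℝ :=
  Real.log (2 * (Real.exp ε * Real.cosh h₁ + Real.exp (-ε) * Real.cosh h₂))

noncomputable def piE1 (ε : ℝ) (h : ℝ × ℝ) : ℝ := deriv (fun x => piE ε x h.2) h.1
noncomputable def piE2 (ε : ℝ) (h : ℝ × ℝ) : ℝ := deriv (fun y => piE ε h.1 y) h.2

/-- The Hessian matrix of `π_ε` at the point `h = (h₊, h₋)`. -/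
noncomputable def hessPiE (ε : ℝ) (h : ℝ × ℝ) : Matrix (Fin 2) (Fin 2) ℝ :=
  !![deriv (fun x => piE1 ε (x, h.2)) h.1, deriv (fun y => piE1 ε (h.1, y)) h.2;
     deriv (fun x => piE2 ε (x, h.2)) h.1, deriv (fun y => piE2 ε (h.1, y)) h.2]

open Real Matrix

namespace PiEAux

/-- The denominator. -/
noncomputable def S (ε x y : ℝ) : ℝ := 2 * (exp ε * cosh x + exp (-ε) * cosh y)

lemma S_pos (ε x y : ℝ) : 0 < S ε x y := by
  have h1 := Real.cosh_pos (x := x)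
  have h2 := Real.cosh_pos (x := y)
  have e1 := Real.exp_pos ε
  have e2 := Real.exp_pos (-ε)
  unfold S; nlinarith

lemma hasDerivAt_S_x (ε x y : ℝ) :
    HasDerivAt (fun x => S ε x y) (2 * (exp ε * sinh x)) x := by
  have h : HasDerivAt (fun x : ℝ => cosh x) (sinh x) x := Real.hasDerivAt_cosh x
  have := ((h.const_mul (exp ε)).add_const (exp (-ε) * cosh y)).const_mul 2
  simpa [S, mul_comm, mul_assoc, mul_left_comm] using this

lemma hasDerivAt_S_y (ε x y : ℝ) :
    HasDerivAt (fun y => S ε x y) (2 * (exp (-ε) * sinh y)) y := by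
  have h : HasDerivAt (fun y : ℝ => cosh y) (sinh y) y := Real.hasDerivAt_cosh y
  have := ((h.const_mul (exp (-ε))).const_add (exp ε * cosh x)).const_mul 2
  simpa [S, mul_comm, mul_assoc, mul_left_comm] using this

lemma hasDerivAt_piE_x (ε x y : ℝ) :
    HasDerivAt (fun x => piE ε x y) (2 * (exp ε * sinh x) / S ε x y) x := by
  have := (hasDerivAt_S_x ε x y).log (S_pos ε x y).ne'
  simpa [piE, S] using this

lemma hasDerivAt_piE_y (ε x y : ℝ) :
    HasDerivAt (fun y => piE ε x y) (2 * (exp (-ε) * sinh y) / S ε x y) y := by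
  have := (hasDerivAt_S_y ε x y).log (S_pos ε x y).ne'
  simpa [piE, S] using this

lemma piE1_eq (ε x y : ℝ) : piE1 ε (x, y) = 2 * (exp ε * sinh x) / S ε x y :=
  (hasDerivAt_piE_x ε x y).deriv

lemma piE2_eq (ε x y : ℝ) : piE2 ε (x, y) = 2 * (exp (-ε) * sinh y) / S ε x y :=
  (hasDerivAt_piE_y ε x y).deriv

lemma hasDerivAt_N_x (ε x : ℝ) :
    HasDerivAt (fun x => 2 * (exp ε * sinh x)) (2 * (exp ε * cosh x)) x := by
  have h : HasDerivAt (fun x : ℝ => sinh x) (cosh x) x := Real.hasDerivAt_sinh x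
  simpa [mul_comm, mul_assoc, mul_left_comm] using (h.const_mul (exp ε)).const_mul 2

lemma hasDerivAt_N_y (ε y : ℝ) :
    HasDerivAt (fun y => 2 * (exp (-ε) * sinh y)) (2 * (exp (-ε) * cosh y)) y := by
  have h : HasDerivAt (fun y : ℝ => sinh y) (cosh y) y := Real.hasDerivAt_sinh y
  simpa [mul_comm, mul_assoc, mul_left_comm] using (h.const_mul (exp (-ε))).const_mul 2

-- second derivatives
lemma H11 (ε x y : ℝ) :
    deriv (fun x => piE1 ε (x, y)) x =
      (2 * (exp ε * cosh x) * S ε x y - 2 * (exp ε * sinh x) * (2 * (exp ε * sinh x))) /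
        (S ε x y) ^ 2 := by
  have h : (fun x => piE1 ε (x, y)) = fun x => 2 * (exp ε * sinh x) / S ε x y := by
    ext x; exact piE1_eq ε x y
  rw [h]
  exact ((hasDerivAt_N_x ε x).div (hasDerivAt_S_x ε x y) (S_pos ε x y).ne').deriv

lemma H22 (ε x y : ℝ) :
    deriv (fun y => piE2 ε (x, y)) y =
      (2 * (exp (-ε) * cosh y) * S ε x y - 2 * (exp (-ε) * sinh y) * (2 * (exp (-ε) * sinh y))) /
        (S ε x y) ^ 2 := by
  have h : (fun y => piE2 ε (x, y)) = fun y => 2 * (exp (-ε) * sinh y) / S ε x y := by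
    ext y; exact piE2_eq ε x y
  rw [h]
  exact ((hasDerivAt_N_y ε y).div (hasDerivAt_S_y ε x y) (S_pos ε x y).ne').deriv

lemma H12 (ε x y : ℝ) :
    deriv (fun y => piE1 ε (x, y)) y =
      (0 * S ε x y - 2 * (exp ε * sinh x) * (2 * (exp (-ε) * sinh y))) / (S ε x y) ^ 2 := by
  have h : (fun y => piE1 ε (x, y)) = fun y => 2 * (exp ε * sinh x) / S ε x y := by
    ext y; exact piE1_eq ε x y
  rw [h]
  exact ((hasDerivAt_const y (2 * (exp ε * sinh x))).div (hasDerivAt_S_y ε x y)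
    (S_pos ε x y).ne').deriv

lemma H21 (ε x y : ℝ) :
    deriv (fun x => piE2 ε (x, y)) x =
      (0 * S ε x y - 2 * (exp (-ε) * sinh y) * (2 * (exp ε * sinh x))) / (S ε x y) ^ 2 := by
  have h : (fun x => piE2 ε (x, y)) = fun x => 2 * (exp (-ε) * sinh y) / S ε x y := by
    ext x; exact piE2_eq ε x y
  rw [h]
  exact ((hasDerivAt_const x (2 * (exp (-ε) * sinh y))).div (hasDerivAt_S_x ε x y)
    (S_pos ε x y).ne').deriv

/-- key quadratic form inequality -/
lemma quad_pos (ε u v d₁ d₂ : ℝ) (hd : d₁ ≠ 0 ∨ d₂ ≠ 0) :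
    0 < 2 * (exp ε * (cosh u * d₁ * d₁) + exp (-ε) * (cosh v * d₂ * d₂)) * S ε u v -
        2 * (exp ε * (sinh u * d₁) + exp (-ε) * (sinh v * d₂)) *
          (2 * (exp ε * (sinh u * d₁) + exp (-ε) * (sinh v * d₂))) := by
  have hA := Real.exp_pos ε
  have hB := Real.exp_pos (-ε)
  have hcu := Real.cosh_sq u
  have hcv := Real.cosh_sq v
  have hP : 1 ≤ cosh u * cosh v + sinh u * sinh v := by
    have := Real.one_le_cosh (u + v); rwa [Real.cosh_add] at this
  have hM : 1 ≤ cosh u * cosh v - sinh u * sinh v := by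
    have := Real.one_le_cosh (u - v); rwa [Real.cosh_sub] at this
  have hdd : 0 < d₁ ^ 2 + d₂ ^ 2 := by
    rcases hd with h | h <;> positivity
  unfold S
  have hbr : d₁ ^ 2 + d₂ ^ 2 ≤
      d₁ ^ 2 * (cosh u * cosh v) + d₂ ^ 2 * (cosh u * cosh v) - 2 * d₁ * d₂ * (sinh u * sinh v) := by
    nlinarith [mul_nonneg (sq_nonneg (d₁ - d₂))
        (by linarith : (0:ℝ) ≤ cosh u * cosh v + sinh u * sinh v - 1),
      mul_nonneg (sq_nonneg (d₁ + d₂))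
        (by linarith : (0:ℝ) ≤ cosh u * cosh v - sinh u * sinh v - 1)]
  have k1 : cosh u ^ 2 * (exp ε * d₁) ^ 2 = (sinh u ^ 2 + 1) * (exp ε * d₁) ^ 2 := by rw [hcu]
  have k2 : cosh v ^ 2 * (exp (-ε) * d₂) ^ 2 = (sinh v ^ 2 + 1) * (exp (-ε) * d₂) ^ 2 := by
    rw [hcv]
  nlinarith [mul_le_mul_of_nonneg_left hbr (mul_pos hA hB).le,
    mul_pos (mul_pos hA hB) hdd, k1, k2, sq_nonneg (exp ε * d₁), sq_nonneg (exp (-ε) * d₂)]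

-- line restriction derivatives
lemma hasDerivAt_line (ε p₁ p₂ d₁ d₂ t : ℝ) :
    HasDerivAt (fun t => S ε (p₁ + t * d₁) (p₂ + t * d₂))
      (2 * (exp ε * (sinh (p₁ + t * d₁) * d₁) + exp (-ε) * (sinh (p₂ + t * d₂) * d₂))) t := by
  have h1 : HasDerivAt (fun t : ℝ => p₁ + t * d₁) d₁ t := by
    simpa using ((hasDerivAt_id t).mul_const d₁).const_add p₁
  have h2 : HasDerivAt (fun t : ℝ => p₂ + t * d₂) d₂ t := by
    simpa using ((hasDerivAt_id t).mul_const d₂).const_add p₂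
  have := ((h1.cosh.const_mul (exp ε)).add (h2.cosh.const_mul (exp (-ε)))).const_mul 2
  simpa [S, mul_comm, mul_assoc, mul_left_comm] using this

lemma hasDerivAt_lineN (ε p₁ p₂ d₁ d₂ t : ℝ) :
    HasDerivAt
      (fun t => 2 * (exp ε * (sinh (p₁ + t * d₁) * d₁) + exp (-ε) * (sinh (p₂ + t * d₂) * d₂)))
      (2 * (exp ε * (cosh (p₁ + t * d₁) * d₁ * d₁) + exp (-ε) * (cosh (p₂ + t * d₂) * d₂ * d₂)))
      t := by
  have h1 : HasDerivAt (fun t : ℝ => p₁ + t * d₁) d₁ t := by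
    simpa using ((hasDerivAt_id t).mul_const d₁).const_add p₁
  have h2 : HasDerivAt (fun t : ℝ => p₂ + t * d₂) d₂ t := by
    simpa using ((hasDerivAt_id t).mul_const d₂).const_add p₂
  have := (((h1.sinh.mul_const d₁).const_mul (exp ε)).add
    ((h2.sinh.mul_const d₂).const_mul (exp (-ε)))).const_mul 2
  exact this

lemma line_strictConvex (ε p₁ p₂ d₁ d₂ : ℝ) (hd : d₁ ≠ 0 ∨ d₂ ≠ 0) :
    StrictConvexOn ℝ Set.univ (fun t => piE ε (p₁ + t * d₁) (p₂ + t * d₂)) := by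
  set g : ℝ → ℝ := fun t => piE ε (p₁ + t * d₁) (p₂ + t * d₂) with hg
  set g1 : ℝ → ℝ := fun t =>
    2 * (exp ε * (sinh (p₁ + t * d₁) * d₁) + exp (-ε) * (sinh (p₂ + t * d₂) * d₂)) /
      S ε (p₁ + t * d₁) (p₂ + t * d₂) with hg1
  have hgd : ∀ t, HasDerivAt g (g1 t) t := by
    intro t
    have := (hasDerivAt_line ε p₁ p₂ d₁ d₂ t).log (S_pos ε _ _).ne'
    simpa [hg, hg1, piE, S] using this
  have hderiv : deriv g = g1 := funext fun t => (hgd t).deriv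
  apply strictConvexOn_of_deriv2_pos convex_univ
  · exact DifferentiableOn.continuousOn (fun t _ => (hgd t).differentiableAt.differentiableWithinAt)
  · intro t _
    have hg1d : HasDerivAt g1
        ((2 * (exp ε * (cosh (p₁ + t * d₁) * d₁ * d₁) +
            exp (-ε) * (cosh (p₂ + t * d₂) * d₂ * d₂)) * S ε (p₁ + t * d₁) (p₂ + t * d₂) -
          2 * (exp ε * (sinh (p₁ + t * d₁) * d₁) + exp (-ε) * (sinh (p₂ + t * d₂) * d₂)) *
            (2 * (exp ε * (sinh (p₁ + t * d₁) * d₁) + exp (-ε) * (sinh (p₂ + t * d₂) * d₂)))) /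
          (S ε (p₁ + t * d₁) (p₂ + t * d₂)) ^ 2) t :=
      (hasDerivAt_lineN ε p₁ p₂ d₁ d₂ t).div (hasDerivAt_line ε p₁ p₂ d₁ d₂ t)
        (S_pos ε _ _).ne'
    have h2 : deriv^[2] g t = deriv g1 t := by
      rw [show deriv^[2] g = deriv (deriv g) from rfl, hderiv]
    rw [h2, hg1d.deriv]
    exact div_pos (quad_pos ε _ _ d₁ d₂ hd) (pow_pos (S_pos ε _ _) 2)

end PiEAux

set_option maxHeartbeats 1000000 in
open PiEAux in
theorem piE_strictConvex_and_hessian_posDef (ε : ℝ) (hε : 0 ≤ ε) :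
    StrictConvexOn ℝ Set.univ (fun h : ℝ × ℝ => piE ε h.1 h.2) ∧
      ∀ h : ℝ × ℝ, (hessPiE ε h).PosDef := by
  constructor
  · refine ⟨convex_univ, ?_⟩
    rintro p - q - hpq a b ha hb hab
    set d₁ := q.1 - p.1 with hd1
    set d₂ := q.2 - p.2 with hd2
    have hd : d₁ ≠ 0 ∨ d₂ ≠ 0 := by
      by_contra h
      push_neg at h
      have h1 : q.1 = p.1 := by have := sub_eq_zero.mp h.1; linarith
      have h2 : q.2 = p.2 := by have := sub_eq_zero.mp h.2; linarith
      exact hpq (Prod.ext h1.symm h2.symm)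
    have hline := line_strictConvex ε p.1 p.2 d₁ d₂ hd
    have key := hline.2 (Set.mem_univ (0:ℝ)) (Set.mem_univ (1:ℝ)) (by norm_num) ha hb hab
    simp only [smul_eq_mul, mul_zero, mul_one, zero_add, zero_mul, one_mul, add_zero] at key
    have e1 : p.1 + d₁ = q.1 := by rw [hd1]; ring
    have e1' : p.2 + d₂ = q.2 := by rw [hd2]; ring
    rw [e1, e1'] at key
    have ha' : a = 1 - b := by linarith
    have eb : (a • p + b • q).1 = p.1 + b * d₁ := by
      simp only [Prod.fst_add, Prod.smul_fst, smul_eq_mul, hd1, ha']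
      ring
    have eb' : (a • p + b • q).2 = p.2 + b * d₂ := by
      simp only [Prod.snd_add, Prod.smul_snd, smul_eq_mul, hd2, ha']
      ring
    simp only [smul_eq_mul]
    show piE ε (a • p + b • q).1 (a • p + b • q).2 < a * piE ε p.1 p.2 + b * piE ε q.1 q.2
    rw [eb, eb']
    exact key
  · intro h
    obtain ⟨x, y⟩ := h
    have hA := Real.exp_pos ε
    have hB := Real.exp_pos (-ε)
    have hS := S_pos ε x y
    have hcu := Real.cosh_sq x
    have hcv := Real.cosh_sq y
    have hP : 1 ≤ cosh x * cosh y + sinh x * sinh y := by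
      have := Real.one_le_cosh (x + y); rwa [Real.cosh_add] at this
    have hM : 1 ≤ cosh x * cosh y - sinh x * sinh y := by
      have := Real.one_le_cosh (x - y); rwa [Real.cosh_sub] at this
    refine Matrix.PosDef.of_dotProduct_mulVec_pos ?_ ?_
    · unfold hessPiE
      rw [Matrix.IsHermitian]
      ext i j
      fin_cases i <;> fin_cases j <;>
        simp [Matrix.conjTranspose_apply, H12, H21] <;> ring
    · intro v hv
      have hv2 : v 0 ≠ 0 ∨ v 1 ≠ 0 := by
        by_contra hc
        push_neg at hc
        exact hv (funext fun i => by fin_cases i <;> simp [hc.1, hc.2])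
      have hvv : 0 < (v 0) ^ 2 + (v 1) ^ 2 := by
        rcases hv2 with h | h <;> positivity
      have hq : dotProduct (star v) ((hessPiE ε (x, y)) *ᵥ v) =
          v 0 * (deriv (fun x' => piE1 ε (x', y)) x * v 0 + deriv (fun y' => piE1 ε (x, y')) y * v 1) +
          v 1 * (deriv (fun x' => piE2 ε (x', y)) x * v 0 + deriv (fun y' => piE2 ε (x, y')) y * v 1) := by
        simp [hessPiE, Matrix.mulVec, dotProduct, Fin.sum_univ_two]
      rw [hq, H11, H12, H21, H22]
      have expand : v 0 * ((2 * (exp ε * cosh x) * S ε x y - 2 * (exp ε * sinh x) * (2 * (exp ε * sinh x))) / S ε x y ^ 2 * v 0 +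
            (0 * S ε x y - 2 * (exp ε * sinh x) * (2 * (exp (-ε) * sinh y))) / S ε x y ^ 2 * v 1) +
          v 1 * ((0 * S ε x y - 2 * (exp (-ε) * sinh y) * (2 * (exp ε * sinh x))) / S ε x y ^ 2 * v 0 +
            (2 * (exp (-ε) * cosh y) * S ε x y - 2 * (exp (-ε) * sinh y) * (2 * (exp (-ε) * sinh y))) / S ε x y ^ 2 * v 1) =
          (v 0 ^ 2 * (2 * (exp ε * cosh x) * S ε x y - 4 * (exp ε * sinh x) ^ 2) -
            8 * v 0 * v 1 * (exp ε * sinh x) * (exp (-ε) * sinh y) +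
            v 1 ^ 2 * (2 * (exp (-ε) * cosh y) * S ε x y - 4 * (exp (-ε) * sinh y) ^ 2)) /
            S ε x y ^ 2 := by
        field_simp
        ring
      rw [expand]
      apply div_pos _ (pow_pos hS 2)
      have hSe : S ε x y = 2 * (exp ε * cosh x + exp (-ε) * cosh y) := rfl
      rw [hSe]
      have hbr : (v 0) ^ 2 + (v 1) ^ 2 ≤
          (v 0) ^ 2 * (cosh x * cosh y) + (v 1) ^ 2 * (cosh x * cosh y) -
            2 * v 0 * v 1 * (sinh x * sinh y) := by
        nlinarith [mul_nonneg (sq_nonneg (v 0 - v 1))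
            (by linarith : (0:ℝ) ≤ cosh x * cosh y + sinh x * sinh y - 1),
          mul_nonneg (sq_nonneg (v 0 + v 1))
            (by linarith : (0:ℝ) ≤ cosh x * cosh y - sinh x * sinh y - 1)]
      have k1 : cosh x ^ 2 * (exp ε * v 0) ^ 2 = (sinh x ^ 2 + 1) * (exp ε * v 0) ^ 2 := by
        rw [hcu]
      have k2 : cosh y ^ 2 * (exp (-ε) * v 1) ^ 2 = (sinh y ^ 2 + 1) * (exp (-ε) * v 1) ^ 2 := by
        rw [hcv]
      nlinarith [mul_le_mul_of_nonneg_left hbr (mul_pos hA hB).le,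
        mul_pos (mul_pos hA hB) hvv, k1, k2, sq_nonneg (exp ε * v 0), sq_nonneg (exp (-ε) * v 1)]
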